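/- Let R₀ : [0,∞) → [0,∞) be continuous and strictly increasing with R₀(0) = 0 and R₀(t) → ∞ as t → ∞, and let φ_S, φ_L > 0 with φ_S > 1 > φ_L (short- and long-term hazard ratio parameters of opposite effect, i.e. the corresponding regression coefficients have opposite signs). Then the Yang–Prentice survival curve S(t) = (1 + (φ_S/φ_L) R₀(t))^(−φ_L) crosses the baseline survival curve S₀(t) = 1/(1 + R₀(t)): there exists t* > 0 such that S(t*) = S₀(t*). The same conclusion holds when φ_S < 1 < φ_L. -/

import Mathlib

open Real Filter Set Topology

private lemma yp_aux_root (c φL φS : ℝ) (hc : 0 < c) (hφL : 0 < φL)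
    (hcφ : c * φL = φS)
    (hcross : (1 < φS ∧ φL < 1) ∨ (φS < 1 ∧ 1 < φL)) :
    ∃ x > (0:ℝ), (1 + c * x) ^ φL = 1 + x := by
  set G : ℝ → ℝ := fun x => 1 + x - (1 + c * x) ^ φL with hGdef
  have hG0 : G 0 = 0 := by simp [hGdef]
  -- continuity
  have hGcont : Continuous G := by
    have h1 : Continuous fun x : ℝ => (1 + c * x) ^ φL :=
      (continuous_const.add (continuous_const.mul continuous_id)).rpow_const
        (fun x => Or.inr hφL.le)
    exact (continuous_const.add continuous_id).sub h1
  -- derivative at 0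
  have h1 : HasDerivAt (fun x : ℝ => 1 + c * x) c 0 := by
    simpa using ((hasDerivAt_id (0:ℝ)).const_mul c).const_add 1
  have h2 : HasDerivAt (fun x : ℝ => (1 + c * x) ^ φL) φS 0 := by
    have h := (Real.hasDerivAt_rpow_const (x := 1 + c * 0) (p := φL)
      (Or.inl (by norm_num))).comp 0 h1
    simpa [Real.one_rpow, mul_comm, hcφ, Function.comp_def] using h
  have hdG : HasDerivAt G (1 - φS) 0 := by
    simpa [hGdef, Pi.sub_def] using ((hasDerivAt_id (0:ℝ)).const_add 1).sub h2
  -- slope limit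
  have hslope : Tendsto (fun x => G x / x) (𝓝[>] (0:ℝ)) (𝓝 (1 - φS)) := by
    have h := hasDerivAt_iff_tendsto_slope.mp hdG
    have h' := h.mono_left (nhdsWithin_mono 0 (fun x hx => ne_of_gt hx))
    refine h'.congr' ?_
    filter_upwards [self_mem_nhdsWithin] with x hx
    rw [slope_def_field, hG0]
    ring
  have key : ∃ a b : ℝ, 0 < a ∧ 0 < b ∧ G a < 0 ∧ 0 < G b := by
    rcases hcross with ⟨hS, hL⟩ | ⟨hS, hL⟩
    · -- small a with G a < 0
      have hev : ∀ᶠ x in 𝓝[>] (0:ℝ), G x / x < 0 :=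
        hslope.eventually_lt_const (by linarith)
      obtain ⟨a, ha, hamem⟩ := (hev.and self_mem_nhdsWithin).exists
      have hapos : 0 < a := hamem
      have haneg : G a < 0 := by
        have h := mul_neg_of_neg_of_pos ha hapos
        rwa [div_mul_cancel₀ _ hapos.ne'] at h
      -- large b with G b > 0
      have hc1 : 1 < c := by nlinarith
      set K : ℝ := c ^ φL with hK
      have hKpos : 0 < K := Real.rpow_pos_of_pos hc φL
      set p : ℝ := 1 - φL with hp
      have hppos : 0 < p := by rw [hp]; linarith
      set b : ℝ := K ^ p⁻¹ with hb
      have hbpos : 0 < b := Real.rpow_pos_of_pos hKpos _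
      refine ⟨a, b, hapos, hbpos, haneg, ?_⟩
      have hKlt : K < (1 + b) ^ p := by
        have h1 : b < 1 + b := by linarith
        have h2 : (b : ℝ) ^ p < (1 + b) ^ p :=
          Real.rpow_lt_rpow hbpos.le h1 hppos
        have h3 : (b : ℝ) ^ p = K := by
          rw [hb, ← Real.rpow_mul hKpos.le, inv_mul_cancel₀ hppos.ne', Real.rpow_one]
        linarith [h3 ▸ h2]
      have hstep : (1 + c * b) ^ φL < 1 + b := by
        have hle : (1 + c * b) ≤ c * (1 + b) := by nlinarith
        have h4 : (1 + c * b) ^ φL ≤ (c * (1 + b)) ^ φL :=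
          Real.rpow_le_rpow (by positivity) hle hφL.le
        have h5 : (c * (1 + b)) ^ φL = K * (1 + b) ^ φL := by
          rw [Real.mul_rpow hc.le (by positivity), hK]
        have h6 : K * (1 + b) ^ φL < (1 + b) ^ p * (1 + b) ^ φL :=
          mul_lt_mul_of_pos_right hKlt (Real.rpow_pos_of_pos (by linarith) _)
        have h7 : (1 + b) ^ p * (1 + b) ^ φL = 1 + b := by
          rw [← Real.rpow_add (by linarith : (0:ℝ) < 1 + b)]
          have hpe : p + φL = 1 := by rw [hp]; ring
          rw [hpe, Real.rpow_one]
        linarith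
      simpa [hGdef] using sub_pos.mpr hstep
    · -- small b with G b > 0
      have hev : ∀ᶠ x in 𝓝[>] (0:ℝ), 0 < G x / x :=
        hslope.eventually_const_lt (by linarith)
      obtain ⟨b, hbp, hbmem⟩ := (hev.and self_mem_nhdsWithin).exists
      have hbpos : 0 < b := hbmem
      have hbposG : 0 < G b := by
        have h := mul_pos hbp hbpos
        rwa [div_mul_cancel₀ _ hbpos.ne'] at h
      -- large a with G a < 0
      have hcφpos : 0 < c ^ φL := Real.rpow_pos_of_pos hc _
      set K : ℝ := 2 / c ^ φL with hK
      have hKpos : 0 < K := by positivity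
      set q : ℝ := φL - 1 with hq
      have hqpos : 0 < q := by rw [hq]; linarith
      set a : ℝ := max 1 (K ^ q⁻¹) + 1 with ha
      have ha1 : 1 ≤ a := by
        have h := le_max_left 1 (K ^ q⁻¹); rw [ha]; linarith
      have hapos : 0 < a := by linarith
      have haK : K ^ q⁻¹ < a := by
        have h := le_max_right 1 (K ^ q⁻¹); rw [ha]; linarith
      have hKq : K < a ^ q := by
        have h2 : (K ^ q⁻¹) ^ q < a ^ q :=
          Real.rpow_lt_rpow (Real.rpow_pos_of_pos hKpos _).le haK hqpos
        rwa [← Real.rpow_mul hKpos.le, inv_mul_cancel₀ hqpos.ne', Real.rpow_one] at h2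
      have hstep : 1 + a < (1 + c * a) ^ φL := by
        have h4 : (c * a) ^ φL ≤ (1 + c * a) ^ φL :=
          Real.rpow_le_rpow (by positivity) (by linarith [mul_pos hc hapos]) hφL.le
        have h5 : (c * a) ^ φL = c ^ φL * a ^ φL :=
          Real.mul_rpow hc.le hapos.le
        have h6 : a ^ φL = a ^ q * a := by
          have hq1 : q + 1 = φL := by rw [hq]; ring
          rw [← hq1, Real.rpow_add_one hapos.ne' q]
        have h7 : c ^ φL * (a ^ q * a) > c ^ φL * (K * a) := by
          have := mul_lt_mul_of_pos_right hKq hapos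
          exact mul_lt_mul_of_pos_left this hcφpos
        have h8 : c ^ φL * (K * a) = 2 * a := by
          rw [hK]; field_simp
        have h9 : 1 + a ≤ 2 * a := by linarith
        calc 1 + a ≤ 2 * a := h9
          _ = c ^ φL * (K * a) := h8.symm
          _ < c ^ φL * (a ^ q * a) := h7
          _ = (c * a) ^ φL := by rw [h5, h6]
          _ ≤ (1 + c * a) ^ φL := h4
      refine ⟨a, b, hapos, hbpos, ?_, hbposG⟩
      simpa [hGdef] using sub_neg.mpr hstep
  obtain ⟨a, b, hapos, hbpos, haneg, hbposG⟩ := key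
  have h0mem : (0:ℝ) ∈ Set.uIcc (G a) (G b) := by
    rw [Set.mem_uIcc]; left; exact ⟨haneg.le, hbposG.le⟩
  obtain ⟨x, hxmem, hx⟩ := intermediate_value_uIcc (hGcont.continuousOn (s := Set.uIcc a b)) h0mem
  refine ⟨x, lt_of_lt_of_le (lt_min hapos hbpos) hxmem.1, ?_⟩
  have hx' : 1 + x - (1 + c * x) ^ φL = 0 := hx
  linarith

/-- Crossing survival curves in the Yang–Prentice model: if the short- and
long-term hazard ratios are on opposite sides of 1 (`φ_S > 1 > φ_L` or
`φ_S < 1 < φ_L`), then the YP survival curve crosses the baseline survival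
curve at some time `t* > 0`. -/
theorem yp_crossing_survival_time
    (R₀ : ℝ → ℝ) (hcont : ContinuousOn R₀ (Set.Ici 0))
    (hmono : StrictMonoOn R₀ (Set.Ici 0)) (hR0 : R₀ 0 = 0)
    (htop : Filter.Tendsto R₀ Filter.atTop Filter.atTop)
    (φS φL : ℝ) (hφS : 0 < φS) (hφL : 0 < φL)
    (hcross : (1 < φS ∧ φL < 1) ∨ (φS < 1 ∧ 1 < φL)) :
    ∃ t > (0:ℝ), (1 + (φS / φL) * R₀ t) ^ (-φL) = 1 / (1 + R₀ t) := by
  have hc : 0 < φS / φL := div_pos hφS hφL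
  obtain ⟨x, hxpos, hroot⟩ := yp_aux_root (φS / φL) φL φS hc hφL
    (div_mul_cancel₀ φS hφL.ne') hcross
  -- find T ≥ 0 with R₀ T ≥ x
  obtain ⟨T, hT0, hTx⟩ : ∃ T : ℝ, 0 ≤ T ∧ x ≤ R₀ T := by
    obtain ⟨T, hT⟩ := ((htop.eventually (eventually_ge_atTop x)).and
      (eventually_ge_atTop (0:ℝ))).exists
    exact ⟨T, hT.2, hT.1⟩
  have hsub : Set.Icc (0:ℝ) T ⊆ Set.Ici 0 := fun y hy => hy.1
  have hxm : x ∈ Set.Icc (R₀ 0) (R₀ T) := ⟨by rw [hR0]; exact hxpos.le, hTx⟩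
  obtain ⟨t, htmem, hRt⟩ := intermediate_value_Icc hT0 (hcont.mono hsub) hxm
  refine ⟨t, ?_, ?_⟩
  · rcases eq_or_lt_of_le htmem.1 with h | h
    · exfalso; rw [← h, hR0] at hRt; linarith
    · exact h
  · rw [hRt]
    have hbpos : (0:ℝ) < 1 + (φS / φL) * x := by positivity
    rw [Real.rpow_neg hbpos.le, hroot, one_div]
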